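/- Let X and Y be finite simple graphs such that there is a quantum homomorphism from X to Y but no graph homomorphism from X to Y. Then the independence number of X ⋉ Y is strictly less than the quantum independence number of X ⋉ Y; in fact α(X ⋉ Y) < |V(X)| = α_q(X ⋉ Y). -/

import Mathlib

open Matrix Finset

/-- A quantum homomorphism from `X` to `Y`: for some `d ≥ 1` there are complex `d × d`
projectors `E x y` (Hermitian idempotents) with `∑ y, E x y = 1` for every `x`,
`E x y * E x y' = 0` whenever `y ≠ y'`, and `E x y * E x' y' = 0` whenever `x, x'`
are adjacent in `X` and `y, y'` are equal or nonadjacent in `Y`. -/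
def IsQuantumHom {V W : Type} [Fintype V] [Fintype W]
    (X : SimpleGraph V) (Y : SimpleGraph W) : Prop :=
  ∃ d : ℕ, 0 < d ∧ ∃ E : V → W → Matrix (Fin d) (Fin d) ℂ,
    (∀ x y, (E x y).IsHermitian ∧ E x y * E x y = E x y) ∧
    (∀ x, ∑ y, E x y = 1) ∧
    (∀ x y y', y ≠ y' → E x y * E x y' = 0) ∧
    (∀ x x' y y', X.Adj x x' → ¬ Y.Adj y y' → E x y * E x' y' = 0)

/-- The homomorphic product `X ⋉ Y`: distinct vertices `(x,y)` and `(x',y')` are adjacent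
iff `x = x'`, or (`x ~ x'` in `X` and `y, y'` are equal or nonadjacent in `Y`). -/
def homProd {V W : Type} (X : SimpleGraph V) (Y : SimpleGraph W) :
    SimpleGraph (V × W) where
  Adj a b := a ≠ b ∧ (a.1 = b.1 ∨ (X.Adj a.1 b.1 ∧ ¬ Y.Adj a.2 b.2))
  symm := ⟨by
    rintro a b ⟨hne, h⟩
    refine ⟨hne.symm, ?_⟩
    rcases h with h | ⟨h1, h2⟩
    · exact Or.inl h.symm
    · exact Or.inr ⟨h1.symm, fun hb => h2 hb.symm⟩⟩
  loopless := ⟨fun a ha => ha.1 rfl⟩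

/-- The independence number: the largest size of a set of pairwise nonadjacent vertices. -/
noncomputable def indepNum {U : Type} [Fintype U] (Z : SimpleGraph U) : ℕ :=
  sSup {n | ∃ s : Finset U, s.card = n ∧ ∀ a ∈ s, ∀ b ∈ s, a ≠ b → ¬ Z.Adj a b}

lemma aux_trace_re_nonneg {d : ℕ} (A : Matrix (Fin d) (Fin d) ℂ)
    (hH : A.IsHermitian) (hI : A * A = A) : 0 ≤ A.trace.re := by
  have h : A.trace = (Aᴴ * A).trace := by rw [hH.eq, hI]
  rw [h]
  have : (Aᴴ * A).trace = ∑ i, ∑ j, (starRingEnd ℂ) (A j i) * A j i := by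
    simp [Matrix.trace, Matrix.diag, Matrix.mul_apply, Matrix.conjTranspose_apply]
  rw [this, Complex.re_sum]
  refine Finset.sum_nonneg fun i _ => ?_
  rw [Complex.re_sum]
  refine Finset.sum_nonneg fun j _ => ?_
  rw [← Complex.normSq_eq_conj_mul_self, Complex.ofReal_re]
  exact Complex.normSq_nonneg _

lemma aux_trace_re_le {d : ℕ} (A : Matrix (Fin d) (Fin d) ℂ)
    (hH : A.IsHermitian) (hI : A * A = A) : A.trace.re ≤ (d : ℝ) := by
  have hH' : (1 - A).IsHermitian := by
    unfold Matrix.IsHermitian at *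
    rw [Matrix.conjTranspose_sub, Matrix.conjTranspose_one, hH]
  have hI' : (1 - A) * (1 - A) = 1 - A := by
    rw [sub_mul, mul_sub, mul_sub, hI]; noncomm_ring
  have := aux_trace_re_nonneg _ hH' hI'
  rw [Matrix.trace_sub, Matrix.trace_one, Complex.sub_re] at this
  simp at this
  linarith

lemma aux_part1 {V W : Type} [Fintype V] [Fintype W]
    (X : SimpleGraph V) (Y : SimpleGraph W) (hc : IsEmpty (X →g Y)) :
    indepNum (homProd X Y) < Fintype.card V := by
  classical
  have hV : Nonempty V := by
    by_contra h
    rw [not_nonempty_iff] at h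
    exact hc.false ⟨fun v => isEmptyElim v, fun {a b} h' => isEmptyElim a⟩
  have hn : 0 < Fintype.card V := Fintype.card_pos
  have hkey : ∀ k ∈ {n | ∃ s : Finset (V × W), s.card = n ∧
      ∀ a ∈ s, ∀ b ∈ s, a ≠ b → ¬ (homProd X Y).Adj a b}, k < Fintype.card V := by
    rintro k ⟨s, hcard, hind⟩
    have hinj : Set.InjOn Prod.fst (s : Set (V × W)) := by
      intro a ha b hb hab
      by_contra hne
      exact hind a ha b hb hne ⟨hne, Or.inl hab⟩
    have hle : k ≤ Fintype.card V := by
      rw [← hcard, ← Finset.card_image_of_injOn hinj]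
      exact Finset.card_le_univ _
    rcases lt_or_eq_of_le hle with h | h
    · exact h
    · exfalso
      have himg : s.image Prod.fst = Finset.univ := by
        apply Finset.eq_univ_of_card
        rw [Finset.card_image_of_injOn hinj, hcard, h]
      have hex : ∀ x : V, ∃ y : W, (x, y) ∈ s := by
        intro x
        have : x ∈ s.image Prod.fst := himg ▸ Finset.mem_univ x
        obtain ⟨z, hz, hz1⟩ := Finset.mem_image.mp this
        exact ⟨z.2, by rwa [← hz1, Prod.mk.eta]⟩
      choose f hf using hex
      refine hc.false ⟨f, ?_⟩
      intro a b hab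
      by_contra hY
      have hne : (a, f a) ≠ (b, f b) := by
        intro h'
        have hab' : a = b := congrArg Prod.fst h'
        rw [hab'] at hab
        exact X.loopless.irrefl b hab
      exact hind _ (hf a) _ (hf b) hne ⟨hne, Or.inr ⟨hab, hY⟩⟩
  have hne : {n | ∃ s : Finset (V × W), s.card = n ∧
      ∀ a ∈ s, ∀ b ∈ s, a ≠ b → ¬ (homProd X Y).Adj a b}.Nonempty :=
    ⟨0, ∅, Finset.card_empty, fun a ha => absurd ha (Finset.notMem_empty a)⟩
  have : indepNum (homProd X Y) ≤ Fintype.card V - 1 :=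
    csSup_le hne fun k hk => Nat.le_sub_one_of_lt (hkey k hk)
  calc indepNum (homProd X Y) ≤ Fintype.card V - 1 := this
    _ < Fintype.card V := Nat.sub_lt hn one_pos

lemma aux_part2 {V W : Type} [Fintype V] [Fintype W]
    (X : SimpleGraph V) (Y : SimpleGraph W)
    (d : ℕ) (E : V → W → Matrix (Fin d) (Fin d) ℂ)
    (h1 : ∀ x y, (E x y).IsHermitian ∧ E x y * E x y = E x y)
    (h2 : ∀ x, ∑ y, E x y = 1)
    (h3 : ∀ x y y', y ≠ y' → E x y * E x y' = 0)
    (h4 : ∀ x x' y y', X.Adj x x' → ¬ Y.Adj y y' → E x y * E x' y' = 0) :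
    ∃ F : Fin (Fintype.card V) → (V × W) → Matrix (Fin d) (Fin d) ℂ,
    (∀ i z, (F i z).IsHermitian ∧ F i z * F i z = F i z) ∧
    (∀ i, ∑ z, F i z = 1) ∧
    (∀ i z z', z ≠ z' → F i z * F i z' = 0) ∧
    (∀ i i' z z', (⊤ : SimpleGraph (Fin (Fintype.card V))).Adj i i' →
       ¬ ((homProd X Y)ᶜ).Adj z z' → F i z * F i' z' = 0) := by
  classical
  set e := (Fintype.equivFin V).symm with he
  refine ⟨fun i z => if z.1 = e i then E (e i) z.2 else 0, ?_, ?_, ?_, ?_⟩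
  · intro i z
    by_cases h : z.1 = e i
    · simpa [h] using h1 (e i) z.2
    · simp [h, Matrix.IsHermitian]
  · intro i
    rw [Fintype.sum_prod_type]
    have hx : ∀ x : V, (∑ y, if x = e i then E (e i) y else 0)
        = if x = e i then (1 : Matrix (Fin d) (Fin d) ℂ) else 0 := by
      intro x
      by_cases h : x = e i <;> simp [h, h2]
    simp only [hx]
    simp
  · intro i z z' hne
    by_cases ha : z.1 = e i
    · by_cases hb : z'.1 = e i
      · have hyz : z.2 ≠ z'.2 := by
          intro h
          exact hne (Prod.ext (ha.trans hb.symm) h)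
        simp only [ha, hb, if_true]
        exact h3 (e i) z.2 z'.2 hyz
      · simp [hb]
    · simp [ha]
  · intro i i' z z' hii hnadj
    by_cases ha : z.1 = e i
    · by_cases hb : z'.1 = e i'
      · simp only [ha, hb, if_true]
        have hii' : i ≠ i' := by simpa using hii
        have hxx : z.1 ≠ z'.1 := by
          rw [ha, hb]; exact fun h => hii' (e.injective h)
        by_cases hzz : z = z'
        · exact absurd (congrArg Prod.fst hzz) hxx
        · have hadj : (homProd X Y).Adj z z' := by
            by_contra h'
            exact hnadj ((SimpleGraph.compl_adj _ z z').mpr ⟨hzz, h'⟩)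
          rcases hadj.2 with h' | ⟨hX, hY⟩
          · exact absurd h' hxx
          · rw [← ha, ← hb] at *
            exact h4 z.1 z'.1 z.2 z'.2 hX hY
      · simp [hb]
    · simp [ha]

lemma aux_part3 {V W : Type} [Fintype V] [Fintype W]
    (X : SimpleGraph V) (Y : SimpleGraph W) (m : ℕ) (hm : Fintype.card V < m)
    (d : ℕ) (hd : 0 < d) (F : Fin m → (V × W) → Matrix (Fin d) (Fin d) ℂ)
    (h1 : ∀ i z, (F i z).IsHermitian ∧ F i z * F i z = F i z)
    (h2 : ∀ i, ∑ z, F i z = 1)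
    (h3 : ∀ i z z', z ≠ z' → F i z * F i z' = 0)
    (h4 : ∀ i i' z z', (⊤ : SimpleGraph (Fin m)).Adj i i' →
       ¬ ((homProd X Y)ᶜ).Adj z z' → F i z * F i' z' = 0) : False := by
  set n := Fintype.card V with hn
  set P : Fin m → V → Matrix (Fin d) (Fin d) ℂ := fun i x => ∑ y, F i (x, y) with hP
  have hPH : ∀ i x, (P i x).IsHermitian := by
    intro i x
    unfold Matrix.IsHermitian
    rw [hP]
    simp only [Matrix.conjTranspose_sum]
    exact Finset.sum_congr rfl fun y _ => (h1 i (x, y)).1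
  have hPidem : ∀ i x, P i x * P i x = P i x := by
    intro i x
    rw [hP]
    simp only [Finset.sum_mul_sum]
    refine Finset.sum_congr rfl fun y _ => ?_
    rw [Finset.sum_eq_single y]
    · exact (h1 i (x, y)).2
    · intro y' _ hne
      exact h3 i (x, y) (x, y') (by simp [Prod.ext_iff, (Ne.symm hne)])
    · exact fun h => absurd (Finset.mem_univ y) h
  have hnotcompl : ∀ (x : V) (y y' : W), ¬ ((homProd X Y)ᶜ).Adj (x, y) (x, y') := by
    intro x y y' hadj
    rw [SimpleGraph.compl_adj] at hadj
    obtain ⟨hne, hnadj⟩ := hadj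
    exact hnadj ⟨hne, Or.inl rfl⟩
  have hPorth : ∀ i i' x, i ≠ i' → P i x * P i' x = 0 := by
    intro i i' x hii
    rw [hP]
    simp only [Finset.sum_mul_sum]
    refine Finset.sum_eq_zero fun y _ => Finset.sum_eq_zero fun y' _ => ?_
    exact h4 i i' (x, y) (x, y') (by simpa using hii) (hnotcompl x y y')
  have hPsum : ∀ i, ∑ x, P i x = 1 := by
    intro i
    rw [hP, ← h2 i]
    exact (Fintype.sum_prod_type _).symm
  set Q : V → Matrix (Fin d) (Fin d) ℂ := fun x => ∑ i, P i x with hQ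
  have hQH : ∀ x, (Q x).IsHermitian := by
    intro x
    unfold Matrix.IsHermitian
    rw [hQ]
    simp only [Matrix.conjTranspose_sum]
    exact Finset.sum_congr rfl fun i _ => hPH i x
  have hQidem : ∀ x, Q x * Q x = Q x := by
    intro x
    rw [hQ]
    simp only [Finset.sum_mul_sum]
    refine Finset.sum_congr rfl fun i _ => ?_
    rw [Finset.sum_eq_single i]
    · exact hPidem i x
    · exact fun i' _ hne => hPorth i i' x (Ne.symm hne)
    · exact fun h => absurd (Finset.mem_univ i) h
  have key : (m : ℝ) * d ≤ (n : ℝ) * d := by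
    have e1 : ∑ x, (Q x).trace.re = (m : ℝ) * d := by
      have : ∀ i : Fin m, ∑ x, (P i x).trace.re = (d : ℝ) := by
        intro i
        rw [← Complex.re_sum, ← Matrix.trace_sum, hPsum i, Matrix.trace_one]
        simp
      calc ∑ x, (Q x).trace.re = ∑ x, ∑ i, (P i x).trace.re := by
            refine Finset.sum_congr rfl fun x _ => ?_
            rw [hQ]
            rw [Matrix.trace_sum, Complex.re_sum]
        _ = ∑ i, ∑ x, (P i x).trace.re := Finset.sum_comm
        _ = ∑ _i : Fin m, (d : ℝ) := Finset.sum_congr rfl fun i _ => this i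
        _ = (m : ℝ) * d := by simp [mul_comm]
    have e2 : ∑ x, (Q x).trace.re ≤ (n : ℝ) * d := by
      calc ∑ x, (Q x).trace.re ≤ ∑ _x : V, (d : ℝ) :=
            Finset.sum_le_sum fun x _ => aux_trace_re_le _ (hQH x) (hQidem x)
        _ = (n : ℝ) * d := by simp [hn, mul_comm]
    linarith
  have hmn : (m : ℝ) ≤ n := by
    have hd' : (0 : ℝ) < d := by exact_mod_cast hd
    exact le_of_mul_le_mul_right key hd'
  exact absurd (by exact_mod_cast hmn) (not_le.mpr hm)

/-- If `X →q Y` but there is no graph homomorphism `X → Y`, then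
`α(X ⋉ Y) < |V(X)| = α_q(X ⋉ Y)`. -/
theorem indep_lt_qIndep_of_quantumHom {V W : Type} [Fintype V] [Fintype W]
    (X : SimpleGraph V) (Y : SimpleGraph W)
    (hq : IsQuantumHom X Y) (hc : IsEmpty (X →g Y)) :
    indepNum (homProd X Y) < Fintype.card V ∧
    IsQuantumHom (⊤ : SimpleGraph (Fin (Fintype.card V))) (homProd X Y)ᶜ ∧
    (∀ m : ℕ, Fintype.card V < m →
      ¬ IsQuantumHom (⊤ : SimpleGraph (Fin m)) (homProd X Y)ᶜ) := by
  obtain ⟨d, hd, E, h1, h2, h3, h4⟩ := hq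
  refine ⟨aux_part1 X Y hc, ?_, ?_⟩
  · obtain ⟨F, hF1, hF2, hF3, hF4⟩ := aux_part2 X Y d E h1 h2 h3 h4
    exact ⟨d, hd, F, hF1, hF2, hF3, hF4⟩
  · rintro m hm ⟨d', hd', F, hF1, hF2, hF3, hF4⟩
    exact aux_part3 X Y m hm d' hd' F hF1 hF2 hF3 hF4
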